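/- arXiv:1801.03348 — 2 statements merged into one kernel-verified Lean document; each statement's English description precedes it below -/
import Mathlib

section
/- Let Γ be a circle bounding the closed disk D, and let σ₁, σ₂ be two disjoint arcs of Γ with side disks ω₁, ω₂ (each centered at its arc's midpoint, passing through its endpoints). Then the outer parts of ω₁ and ω₂ are disjoint: (ω₁ \ D) ∩ (ω₂ \ D) = ∅. -/
open EuclideanGeometry Metric Real

/-- The point at angle `θ` on the circle centered at `O` with radius `r`
in the Euclidean plane. -/
noncomputable def circlePt (O : EuclideanSpace ℝ (Fin 2)) (r θ : ℝ) :
    EuclideanSpace ℝ (Fin 2) :=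
  O + r • (WithLp.equiv 2 (Fin 2 → ℝ)).symm ![Real.cos θ, Real.sin θ]

/-- The side disk of the arc from angle `a` to angle `b` (traversed in increasing angle)
of the circle centered at `O` with radius `r`: the closed disk centered at the midpoint
of the arc whose boundary passes through the two endpoints of the arc. -/
noncomputable def sideDisk (O : EuclideanSpace ℝ (Fin 2)) (r a b : ℝ) :
    Set (EuclideanSpace ℝ (Fin 2)) :=
  Metric.closedBall (circlePt O r ((a + b) / 2))
    (dist (circlePt O r ((a + b) / 2)) (circlePt O r a))


lemma angle_lem (x w : ℝ) (hw0 : 0 < w) (hwπ : w < π) (h : Real.cos w < Real.cos x) :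
    ∃ k : ℤ, |x - 2*π*k| < w := by
  have h2π : (0:ℝ) < 2*π := by positivity
  set y := toIocMod h2π (-π) x with hy
  obtain ⟨k, hk⟩ : ∃ k : ℤ, y = x - k • (2*π) := ⟨toIocDiv h2π (-π) x, rfl⟩
  have hmem : y ∈ Set.Ioc (-π) (-π + 2*π) := toIocMod_mem_Ioc h2π (-π) x
  have hcos : Real.cos y = Real.cos x := by
    rw [hk, zsmul_eq_mul, show x - (k:ℝ)*(2*π) = x + (-k:ℤ)*(2*π) by push_cast; ring,
      Real.cos_add_int_mul_two_pi]
  have habs : |y| ≤ π := by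
    rw [abs_le]; constructor
    · linarith [hmem.1]
    · linarith [hmem.2]
  have hcy : Real.cos w < Real.cos |y| := by rwa [Real.cos_abs, hcos]
  have hlt : |y| < w := by
    by_contra hcon
    push_neg at hcon
    rcases eq_or_lt_of_le hcon with he | hl
    · rw [← he] at hcy; exact lt_irrefl _ hcy
    · have := Real.strictAntiOn_cos ⟨hw0.le, hwπ.le⟩ ⟨abs_nonneg y, habs⟩ hl
      linarith
  refine ⟨k, ?_⟩
  have hyx : y = x - 2*π*k := by rw [hk, zsmul_eq_mul]; ring
  rw [← hyx]; exact hlt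

lemma key_alg (s r c cw : ℝ) (hr : 0 < r) (hs : r < s) (hcw : cw ≤ 1)
    (h : s^2 + r^2 - 2*r*s*c ≤ 2*r^2*(1 - cw)) : cw < c := by
  have h1 : 0 < s + r - 2*r*cw := by nlinarith
  have h2 : 0 < (s - r) * (s + r - 2*r*cw) := mul_pos (by linarith) h1
  nlinarith [mul_pos hr (hr.trans hs)]

lemma circlePt_apply (O : EuclideanSpace ℝ (Fin 2)) (r θ : ℝ) (i : Fin 2) :
    circlePt O r θ i = O i + r * ![Real.cos θ, Real.sin θ] i := by
  simp [circlePt]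

lemma dist_sq (x y : EuclideanSpace ℝ (Fin 2)) :
    dist x y ^ 2 = (x 0 - y 0)^2 + (x 1 - y 1)^2 := by
  rw [EuclideanSpace.dist_eq, Fin.sum_univ_two, Real.sq_sqrt (by positivity)]
  simp [Real.dist_eq, sq_abs]

lemma outer_angle (O X : EuclideanSpace ℝ (Fin 2)) (r a b : ℝ) (hr : 0 < r)
    (hX : X ∈ sideDisk O r a b) (hXD : r < dist X O) :
    Real.cos ((b-a)/2) <
      Real.cos (Complex.arg ⟨X 0 - O 0, X 1 - O 1⟩ - (a+b)/2) := by
  set v0 := X 0 - O 0 with hv0def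
  set v1 := X 1 - O 1 with hv1def
  set m := (a+b)/2 with hm
  set w := (b-a)/2 with hw
  set s := dist X O with hsdef
  have hs2 : s^2 = v0^2 + v1^2 := dist_sq X O
  have hs0 : 0 < s := hr.trans hXD
  -- membership inequality, squared
  have hd : dist X (circlePt O r m) ≤ dist (circlePt O r m) (circlePt O r a) := hX
  have hdsq : dist X (circlePt O r m) ^ 2 ≤ dist (circlePt O r m) (circlePt O r a) ^ 2 :=
    pow_le_pow_left₀ dist_nonneg hd 2
  rw [dist_sq, dist_sq] at hdsq
  simp only [circlePt_apply, Matrix.cons_val_zero, Matrix.cons_val_one, Matrix.head_cons] at hdsq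
  have e0 : X 0 = O 0 + v0 := by rw [hv0def]; ring
  have e1 : X 1 = O 1 + v1 := by rw [hv1def]; ring
  rw [e0, e1] at hdsq
  -- simplify RHS
  have hma : m - a = w := by rw [hm, hw]; ring
  have hcma : Real.cos m * Real.cos a + Real.sin m * Real.sin a = Real.cos w := by
    rw [← Real.cos_sub, hma]
  have hpm := Real.sin_sq_add_cos_sq m
  have hpa := Real.sin_sq_add_cos_sq a
  have hineq : s^2 + r^2 - 2*r*(v0 * Real.cos m + v1 * Real.sin m) ≤ 2*r^2*(1 - Real.cos w) := by
    rw [hs2]; nlinarith [hdsq]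
  -- complex argument
  set z : ℂ := ⟨v0, v1⟩ with hz
  have hzabs : ‖z‖ = s := by
    rw [Complex.norm_def, Complex.normSq_mk,
      show v0*v0+v1*v1 = s^2 by rw [hs2]; ring]
    exact Real.sqrt_sq hs0.le
  have hzne : z ≠ 0 := by
    intro h0
    rw [h0, norm_zero] at hzabs
    exact hs0.ne' hzabs.symm
  have hcosθ : Real.cos (Complex.arg z) = v0 / s := by
    rw [Complex.cos_arg hzne, hzabs]
  have hsinθ : Real.sin (Complex.arg z) = v1 / s := by
    rw [Complex.sin_arg, hzabs]
  have hv0 : v0 = s * Real.cos (Complex.arg z) := by rw [hcosθ]; field_simp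
  have hv1 : v1 = s * Real.sin (Complex.arg z) := by rw [hsinθ]; field_simp
  have hc : Real.cos (Complex.arg z - m)
      = (v0 * Real.cos m + v1 * Real.sin m) / s := by
    rw [Real.cos_sub, hv0, hv1]; field_simp
  apply key_alg s r _ _ hr hXD (Real.cos_le_one w)
  rw [hc]
  have : 2*r*s*((v0 * Real.cos m + v1 * Real.sin m) / s) = 2*r*(v0 * Real.cos m + v1 * Real.sin m) := by
    field_simp
  rw [this]; exact hineq

/-- The outer parts (parts outside the closed disk `D` bounded by the circle) of the side
disks of two disjoint arcs are disjoint. -/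
theorem stmt_16 (O : EuclideanSpace ℝ (Fin 2)) (r a₁ b₁ a₂ b₂ : ℝ) (hr : 0 < r)
    (h1 : a₁ < b₁) (h2 : b₁ < a₂) (h3 : a₂ < b₂) (h4 : b₂ < a₁ + 2 * π) :
    (sideDisk O r a₁ b₁ \ Metric.closedBall O r) ∩
      (sideDisk O r a₂ b₂ \ Metric.closedBall O r) = ∅ := by
  rw [Set.eq_empty_iff_forall_notMem]
  rintro X ⟨⟨hX1, hXD⟩, hX2, -⟩
  rw [Metric.mem_closedBall, not_le] at hXD
  have hπ := Real.pi_pos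
  set θ := Complex.arg ⟨X 0 - O 0, X 1 - O 1⟩ with hθ
  have hc1 : Real.cos ((b₁-a₁)/2) < Real.cos (θ - (a₁+b₁)/2) :=
    outer_angle O X r a₁ b₁ hr hX1 hXD
  have hc2 : Real.cos ((b₂-a₂)/2) < Real.cos (θ - (a₂+b₂)/2) :=
    outer_angle O X r a₂ b₂ hr hX2 hXD
  obtain ⟨k₁, hk₁⟩ := angle_lem (θ - (a₁+b₁)/2) ((b₁-a₁)/2) (by linarith) (by linarith) hc1
  obtain ⟨k₂, hk₂⟩ := angle_lem (θ - (a₂+b₂)/2) ((b₂-a₂)/2) (by linarith) (by linarith) hc2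
  rw [abs_lt] at hk₁ hk₂
  obtain ⟨hk₁l, hk₁r⟩ := hk₁
  obtain ⟨hk₂l, hk₂r⟩ := hk₂
  -- a_i + 2πk_i < θ < b_i + 2πk_i
  have hA1 : a₁ + 2*π*k₁ < θ := by linarith
  have hB1 : θ < b₁ + 2*π*k₁ := by linarith
  have hA2 : a₂ + 2*π*k₂ < θ := by linarith
  have hB2 : θ < b₂ + 2*π*k₂ := by linarith
  have hkk : k₁ ≤ k₂ := by
    by_contra hcon
    push_neg at hcon
    have : (k₂:ℝ) + 1 ≤ k₁ := by exact_mod_cast hcon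
    nlinarith
  have : 2*π*(k₁:ℝ) ≤ 2*π*k₂ := by
    have : (k₁:ℝ) ≤ k₂ := by exact_mod_cast hkk
    nlinarith
  linarith
end

section
/- Let Γ be a circle with marked points A, B, C, D in cyclic order (possibly among other marked points), such that the side disks of arcs AB and CD intersect. Then the side disks of arcs BC and DA are disjoint. -/
open EuclideanGeometry Metric Real

lemma dist_circlePt (O : EuclideanSpace ℝ (Fin 2)) {r : ℝ} (hr : 0 ≤ r) (θ φ : ℝ) :
    dist (circlePt O r θ) (circlePt O r φ) = 2 * r * |Real.sin ((θ - φ)/2)| := by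
  rw [circlePt, circlePt, EuclideanSpace.dist_eq]
  rw [Fin.sum_univ_two]
  simp only [PiLp.add_apply, PiLp.smul_apply, WithLp.equiv_symm_apply, PiLp.toLp_apply, smul_eq_mul,
    Matrix.cons_val_zero, Matrix.cons_val_one, Matrix.head_cons, Real.dist_eq]
  have h1 : Real.cos (θ - φ) = 1 - 2 * Real.sin ((θ - φ)/2) ^ 2 := by
    have hc := Real.cos_two_mul ((θ - φ)/2)
    have hs := Real.sin_sq_add_cos_sq ((θ - φ)/2)
    rw [show 2 * ((θ - φ)/2) = θ - φ by ring] at hc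
    linarith
  have h2 : |O 0 + r * Real.cos θ - (O 0 + r * Real.cos φ)| ^ 2
      + |O 1 + r * Real.sin θ - (O 1 + r * Real.sin φ)| ^ 2
      = (2 * r * |Real.sin ((θ - φ)/2)|) ^ 2 := by
    rw [sq_abs, sq_abs]
    have := Real.cos_sub θ φ
    have := Real.sin_sq_add_cos_sq θ
    have := Real.sin_sq_add_cos_sq φ
    have h3 : (2 * r * |Real.sin ((θ - φ)/2)|) ^ 2 = 4 * r^2 * Real.sin ((θ - φ)/2) ^2 := by
      rw [mul_pow, mul_pow, sq_abs]; ring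
    rw [h3]
    nlinarith [h1]
  rw [h2, Real.sqrt_sq (by positivity)]

lemma sum_to_prod (x y : ℝ) :
    Real.sin x + Real.sin y = 2 * Real.sin ((x+y)/2) * Real.cos ((x-y)/2) := by
  have h1 := Real.sin_add ((x+y)/2) ((x-y)/2)
  have h2 := Real.sin_sub ((x+y)/2) ((x-y)/2)
  rw [show (x+y)/2 + (x-y)/2 = x by ring] at h1
  rw [show (x+y)/2 - (x-y)/2 = y by ring] at h2
  linarith

lemma key2 (s t u v : ℝ) (hst : s + t = π/4) (hs0 : 0 < s) (ht0 : 0 < t)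
    (hus : |u| < s) (hvt : |v| < t)
    (h : 1 - 2 * Real.sin v ^ 2 ≤ 2 * Real.sin s * Real.cos u)
    (hc : 1 - 2 * Real.sin u ^ 2 ≤ 2 * Real.sin t * Real.cos v) : False := by
  have hpi := Real.pi_pos
  have hs4 : s < π/4 := by linarith
  have ht4 : t < π/4 := by linarith
  have hcu : Real.cos s < Real.cos u := by
    rw [← Real.cos_abs u]
    exact Real.cos_lt_cos_of_nonneg_of_le_pi (abs_nonneg _) (by linarith) hus
  have hcv : Real.cos t < Real.cos v := by
    rw [← Real.cos_abs v]
    exact Real.cos_lt_cos_of_nonneg_of_le_pi (abs_nonneg _) (by linarith) hvt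
  have hsc_s : Real.sin s < Real.cos s := by
    rw [← Real.cos_pi_div_two_sub]
    exact Real.cos_lt_cos_of_nonneg_of_le_pi (by linarith) (by linarith) (by linarith)
  have hsc_t : Real.sin t < Real.cos t := by
    rw [← Real.cos_pi_div_two_sub]
    exact Real.cos_lt_cos_of_nonneg_of_le_pi (by linarith) (by linarith) (by linarith)
  have hss0 : 0 < Real.sin s := Real.sin_pos_of_pos_of_lt_pi hs0 (by linarith)
  have hst0 : 0 < Real.sin t := Real.sin_pos_of_pos_of_lt_pi ht0 (by linarith)
  have A : Real.sin u ^2 + Real.sin s * Real.cos u < Real.sin s^2 + Real.sin s * Real.cos s := by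
    have hp : 0 < (Real.cos u - Real.cos s) * (Real.cos u + Real.cos s - Real.sin s) :=
      mul_pos (by linarith) (by linarith)
    have keyA : Real.sin s^2 + Real.sin s * Real.cos s - Real.sin u^2 - Real.sin s * Real.cos u
        = (Real.cos u - Real.cos s) * (Real.cos u + Real.cos s - Real.sin s) := by
      linear_combination Real.sin_sq_add_cos_sq s - Real.sin_sq_add_cos_sq u
    linarith
  have B : Real.sin v ^2 + Real.sin t * Real.cos v < Real.sin t^2 + Real.sin t * Real.cos t := by
    have hp : 0 < (Real.cos v - Real.cos t) * (Real.cos v + Real.cos t - Real.sin t) :=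
      mul_pos (by linarith) (by linarith)
    have keyB : Real.sin t^2 + Real.sin t * Real.cos t - Real.sin v^2 - Real.sin t * Real.cos v
        = (Real.cos v - Real.cos t) * (Real.cos v + Real.cos t - Real.sin t) := by
      linear_combination Real.sin_sq_add_cos_sq t - Real.sin_sq_add_cos_sq v
    linarith
  have I : Real.sin s^2 + Real.sin s * Real.cos s + Real.sin t^2 + Real.sin t * Real.cos t = 1 := by
    have ht' : t = π/4 - s := by linarith
    rw [ht', Real.sin_sub, Real.cos_sub, Real.sin_pi_div_four, Real.cos_pi_div_four]
    have h2 : Real.sqrt 2 ^ 2 = 2 := Real.sq_sqrt (by norm_num)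
    nlinarith [Real.sin_sq_add_cos_sq s]
  linarith

lemma key {α β γ δ : ℝ} (hα : 0 < α) (hβ : 0 < β) (hγ : 0 < γ) (hδ : 0 < δ)
    (hsum : α + β + γ + δ = π/2)
    (h : Real.sin (α + 2*β + γ) ≤ Real.sin α + Real.sin γ) :
    Real.sin β + Real.sin δ < Real.sin (β + 2*γ + δ) := by
  by_contra hc
  push_neg at hc
  rw [sum_to_prod α γ] at h
  rw [sum_to_prod β δ] at hc
  have e1 : Real.sin (α + 2*β + γ) = 1 - 2 * Real.sin ((β-δ)/2) ^ 2 := by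
    rw [show α + 2*β + γ = π/2 - -(2*((β-δ)/2)) by linarith,
      Real.sin_pi_div_two_sub, Real.cos_neg, Real.cos_two_mul']
    linear_combination Real.sin_sq_add_cos_sq ((β-δ)/2)
  have e2 : Real.sin (β + 2*γ + δ) = 1 - 2 * Real.sin ((α-γ)/2) ^ 2 := by
    rw [show β + 2*γ + δ = π/2 - 2*((α-γ)/2) by linarith,
      Real.sin_pi_div_two_sub, Real.cos_two_mul']
    linear_combination Real.sin_sq_add_cos_sq ((α-γ)/2)
  rw [e1] at h
  rw [e2] at hc
  exact key2 ((α+γ)/2) ((β+δ)/2) ((α-γ)/2) ((β-δ)/2) (by linarith) (by linarith) (by linarith)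
    (by rw [abs_lt]; constructor <;> linarith)
    (by rw [abs_lt]; constructor <;> linarith) h hc

/-- If `A, B, C, D` are in cyclic order on a circle and the side disks of arcs `AB` and
`CD` intersect, then the side disks of arcs `BC` and `DA` are disjoint. -/
theorem stmt_19 (O : EuclideanSpace ℝ (Fin 2)) (r a b c d : ℝ) (hr : 0 < r)
    (hab : a < b) (hbc : b < c) (hcd : c < d) (hda : d < a + 2 * π)
    (h : (sideDisk O r a b ∩ sideDisk O r c d).Nonempty) :
    sideDisk O r b c ∩ sideDisk O r d (a + 2 * π) = ∅ := by
  have hpi := Real.pi_pos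
  set α := (b - a) / 4 with hα_def
  set β := (c - b) / 4 with hβ_def
  set γ := (d - c) / 4 with hγ_def
  set δ := (a + 2 * π - d) / 4 with hδ_def
  have hα : 0 < α := by rw [hα_def]; linarith
  have hβ : 0 < β := by rw [hβ_def]; linarith
  have hγ : 0 < γ := by rw [hγ_def]; linarith
  have hδ : 0 < δ := by rw [hδ_def]; linarith
  have hsum : α + β + γ + δ = π / 2 := by
    rw [hα_def, hβ_def, hγ_def, hδ_def]; ring
  have hα2 : α < π / 2 := by linarith
  have hβ2 : β < π / 2 := by linarith
  have hγ2 : γ < π / 2 := by linarith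
  have hδ2 : δ < π / 2 := by linarith
  -- radii and center distances
  have rab : dist (circlePt O r ((a + b) / 2)) (circlePt O r a) = 2 * r * Real.sin α := by
    rw [dist_circlePt O hr.le, show ((a + b) / 2 - a) / 2 = α by rw [hα_def]; ring,
      abs_of_pos (Real.sin_pos_of_pos_of_lt_pi hα (by linarith))]
  have rcd : dist (circlePt O r ((c + d) / 2)) (circlePt O r c) = 2 * r * Real.sin γ := by
    rw [dist_circlePt O hr.le, show ((c + d) / 2 - c) / 2 = γ by rw [hγ_def]; ring,
      abs_of_pos (Real.sin_pos_of_pos_of_lt_pi hγ (by linarith))]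
  have rbc : dist (circlePt O r ((b + c) / 2)) (circlePt O r b) = 2 * r * Real.sin β := by
    rw [dist_circlePt O hr.le, show ((b + c) / 2 - b) / 2 = β by rw [hβ_def]; ring,
      abs_of_pos (Real.sin_pos_of_pos_of_lt_pi hβ (by linarith))]
  have rda : dist (circlePt O r ((d + (a + 2 * π)) / 2)) (circlePt O r d)
      = 2 * r * Real.sin δ := by
    rw [dist_circlePt O hr.le, show ((d + (a + 2 * π)) / 2 - d) / 2 = δ by rw [hδ_def]; ring,
      abs_of_pos (Real.sin_pos_of_pos_of_lt_pi hδ (by linarith))]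
  have dac : dist (circlePt O r ((a + b) / 2)) (circlePt O r ((c + d) / 2))
      = 2 * r * Real.sin (α + 2 * β + γ) := by
    rw [dist_circlePt O hr.le,
      show ((a + b) / 2 - (c + d) / 2) / 2 = -(α + 2 * β + γ) by
        rw [hα_def, hβ_def, hγ_def]; ring,
      Real.sin_neg, abs_neg,
      abs_of_pos (Real.sin_pos_of_pos_of_lt_pi (by linarith) (by linarith))]
  have dbd : dist (circlePt O r ((b + c) / 2)) (circlePt O r ((d + (a + 2 * π)) / 2))
      = 2 * r * Real.sin (β + 2 * γ + δ) := by
    rw [dist_circlePt O hr.le,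
      show ((b + c) / 2 - (d + (a + 2 * π)) / 2) / 2 = -(β + 2 * γ + δ) by
        rw [hβ_def, hγ_def, hδ_def]; ring,
      Real.sin_neg, abs_neg,
      abs_of_pos (Real.sin_pos_of_pos_of_lt_pi (by linarith) (by linarith))]
  -- from the nonempty intersection
  obtain ⟨p, hp1, hp2⟩ := h
  rw [sideDisk, Metric.mem_closedBall] at hp1
  rw [sideDisk, Metric.mem_closedBall] at hp2
  have htri : dist (circlePt O r ((a + b) / 2)) (circlePt O r ((c + d) / 2))
      ≤ dist (circlePt O r ((a + b) / 2)) (circlePt O r a)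
        + dist (circlePt O r ((c + d) / 2)) (circlePt O r c) := by
    calc dist (circlePt O r ((a + b) / 2)) (circlePt O r ((c + d) / 2))
        ≤ dist (circlePt O r ((a + b) / 2)) p + dist p (circlePt O r ((c + d) / 2)) :=
          dist_triangle _ _ _
      _ ≤ _ := by rw [dist_comm _ p]; exact add_le_add hp1 hp2
  rw [dac, rab, rcd] at htri
  have hkey : Real.sin (α + 2 * β + γ) ≤ Real.sin α + Real.sin γ := by
    have h2r : (0:ℝ) < 2 * r := by linarith
    nlinarith
  have hres := key hα hβ hγ hδ hsum hkey
  rw [sideDisk, sideDisk]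
  refine Set.disjoint_iff_inter_eq_empty.mp (Metric.closedBall_disjoint_closedBall ?_)
  rw [rbc, rda, dbd]
  nlinarith
end
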